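/- arXiv:2108.02291 — 2 statements merged into one kernel-verified Lean document; each statement's English description precedes it below -/
import Mathlib

section
/- Let $X$ be a Banach space and $\alpha>0$. A strongly measurable function $f:[t_0,t_1]\to X$ satisfies $f\in L^1(t_0,b;X)$ for every $b\in(t_0,t_1)$ if and only if the Riemann-Liouville fractional integral $J^\alpha_{t_0,t}f(t)$ exists for almost every $t\in[t_0,t_1]$. -/
open MeasureTheory Real Set

/-- The Riemann-Liouville fractional integral of order `α` based at `t₀`. -/
noncomputable def RL {X : Type*} [NormedAddCommGroup X] [NormedSpace ℝ X]
    (α t₀ : ℝ) (f : ℝ → X) (t : ℝ) : X :=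
  (Real.Gamma α)⁻¹ • ∫ s in t₀..t, (t - s) ^ (α - 1) • f s

lemma aux_back {X : Type*} [NormedAddCommGroup X] [NormedSpace ℝ X]
    {α t₀ b t : ℝ} (hα : 0 < α) {f : ℝ → X} (h1 : t₀ < b) (h2 : b < t)
    (hf : AEStronglyMeasurable f (volume.restrict (Ioc t₀ b)))
    (hint : IntegrableOn (fun s => (t - s) ^ (α - 1) • f s) (Ioc t₀ b) volume) :
    IntegrableOn f (Icc t₀ b) volume := by
  rw [integrableOn_Icc_iff_integrableOn_Ioc]
  set C : ℝ := max ((t - b) ^ (1 - α)) ((t - t₀) ^ (1 - α)) with hC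
  apply Integrable.mono' (g := fun s => C * ‖(t - s) ^ (α - 1) • f s‖) (hint.norm.const_mul C) hf
  filter_upwards [ae_restrict_mem measurableSet_Ioc] with s hs
  have hts : 0 < t - s := by simp only [sub_pos]; exact lt_of_le_of_lt hs.2 h2
  have hkey : (t - s) ^ (1 - α) ≤ C := by
    rcases le_or_gt (1 - α) 0 with h | h
    · exact le_max_of_le_left (Real.rpow_le_rpow_of_nonpos (by linarith [hs.2]) (by linarith [hs.2]) h)
    · exact le_max_of_le_right (Real.rpow_le_rpow hts.le (by linarith [hs.1]) h.le)
  have hmul : (t - s) ^ (1 - α) * (t - s) ^ (α - 1) = 1 := by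
    rw [← Real.rpow_add hts]; norm_num
  calc ‖f s‖ = ((t - s) ^ (1 - α) * (t - s) ^ (α - 1)) * ‖f s‖ := by rw [hmul, one_mul]
    _ = (t - s) ^ (1 - α) * ((t - s) ^ (α - 1) * ‖f s‖) := by ring
    _ ≤ C * ((t - s) ^ (α - 1) * ‖f s‖) := by
        apply mul_le_mul_of_nonneg_right hkey
        positivity
    _ = C * ‖(t - s) ^ (α - 1) • f s‖ := by
        rw [norm_smul, Real.norm_rpow_of_nonneg hts.le]
        rw [Real.norm_of_nonneg hts.le]

lemma aux_fwd_sm {X : Type*} [NormedAddCommGroup X] [NormedSpace ℝ X]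
    {α t₀ b : ℝ} (hα : 0 < α) {f : ℝ → X} (h1 : t₀ < b)
    (hsm : StronglyMeasurable f)
    (hfi : IntegrableOn f (Ioc t₀ b) volume) :
    ∀ᵐ t ∂(volume.restrict (Ioc t₀ b)),
      IntervalIntegrable (fun s => (t - s) ^ (α - 1) • f s) volume t₀ t := by
  set μ : Measure ℝ := volume.restrict (Ioc t₀ b) with hμ
  set K : ℝ × ℝ → ENNReal := fun p =>
    ({q : ℝ × ℝ | q.2 ≤ q.1}).indicator
      (fun q => ENNReal.ofReal ((q.1 - q.2) ^ (α - 1)) * ENNReal.ofReal ‖f q.2‖) p with hK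
  have hKmeas : Measurable K := by
    apply Measurable.indicator _ (measurableSet_le measurable_snd measurable_fst)
    exact (((measurable_fst.sub measurable_snd).pow_const _).ennreal_ofReal).mul
      ((hsm.norm.measurable.comp measurable_snd).ennreal_ofReal)
  -- finiteness of the double integral
  have hfin : ∫⁻ t, (∫⁻ s, K (t, s) ∂μ) ∂μ < ⊤ := by
    have hswap : ∫⁻ t, (∫⁻ s, K (t, s) ∂μ) ∂μ = ∫⁻ s, (∫⁻ t, K (t, s) ∂μ) ∂μ :=
      lintegral_lintegral_swap hKmeas.aemeasurable
    rw [hswap]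
    have hbound : ∫⁻ s, (∫⁻ t, K (t, s) ∂μ) ∂μ
        ≤ ∫⁻ s, ENNReal.ofReal ‖f s‖ * ENNReal.ofReal ((b - t₀) ^ α / α) ∂μ := by
      apply lintegral_mono_ae
      filter_upwards [ae_restrict_mem measurableSet_Ioc] with s hs
      have hfun : (fun t => K (t, s)) = (Ici s).indicator
          (fun t => ENNReal.ofReal ((t - s) ^ (α - 1)) * ENNReal.ofReal ‖f s‖) := by
        ext t
        simp only [hK, Set.indicator_apply, mem_setOf_eq, mem_Ici]
      rw [hfun, lintegral_indicator measurableSet_Ici, hμ,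
        Measure.restrict_restrict measurableSet_Ici]
      have hset : Ici s ∩ Ioc t₀ b = Icc s b := by
        ext x
        simp only [mem_inter_iff, mem_Ici, mem_Ioc, mem_Icc]
        exact ⟨fun ⟨a1, _, a3⟩ => ⟨a1, a3⟩, fun ⟨a1, a2⟩ => ⟨a1, lt_of_lt_of_le hs.1 a1, a2⟩⟩
      rw [hset, lintegral_mul_const' _ _ ENNReal.ofReal_ne_top]
      rw [mul_comm (ENNReal.ofReal ‖f s‖)]
      apply mul_le_mul_left
      -- ∫⁻ t in Icc s b, ofReal ((t-s)^(α-1)) ≤ ofReal ((b-t₀)^α/α)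
      have hsb : s ≤ b := hs.2
      have hII : IntervalIntegrable (fun t => (t - s) ^ (α - 1)) volume s b := by
        have := (intervalIntegral.intervalIntegrable_rpow' (a := 0) (b := b - s)
          (show (-1 : ℝ) < α - 1 by linarith)).comp_sub_right s
        simpa using this
      have hInt : IntegrableOn (fun t => (t - s) ^ (α - 1)) (Icc s b) volume := by
        rw [integrableOn_Icc_iff_integrableOn_Ioc]
        exact (intervalIntegrable_iff_integrableOn_Ioc_of_le hsb).mp hII
      have hnn : 0 ≤ᵐ[volume.restrict (Icc s b)] (fun t => (t - s) ^ (α - 1)) := by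
        filter_upwards [ae_restrict_mem measurableSet_Icc] with t htt
        exact Real.rpow_nonneg (by linarith [htt.1]) _
      rw [← ofReal_integral_eq_lintegral_ofReal hInt hnn]
      have hval : ∫ t in Icc s b, (t - s) ^ (α - 1) = (b - s) ^ α / α := by
        rw [integral_Icc_eq_integral_Ioc, ← intervalIntegral.integral_of_le hsb]
        rw [intervalIntegral.integral_comp_sub_right (fun u => u ^ (α - 1)) s, sub_self]
        rw [integral_rpow (Or.inl (by linarith))]
        rw [Real.zero_rpow (by linarith : α - 1 + 1 ≠ 0)]
        rw [show α - 1 + 1 = α by ring]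
        ring
      rw [hval]
      apply ENNReal.ofReal_le_ofReal
      gcongr
      · linarith [hs.1]
    refine lt_of_le_of_lt hbound ?_
    rw [lintegral_mul_const' _ _ ENNReal.ofReal_ne_top]
    apply ENNReal.mul_lt_top _ ENNReal.ofReal_lt_top
    exact (hasFiniteIntegral_iff_norm f).mp hfi.hasFiniteIntegral
  have hae := ae_lt_top (hKmeas.lintegral_prod_right') hfin.ne
  filter_upwards [hae, ae_restrict_mem measurableSet_Ioc] with t hfin_t htmem
  have ht0t : t₀ < t := htmem.1
  have htb : t ≤ b := htmem.2
  rw [intervalIntegrable_iff_integrableOn_Ioc_of_le ht0t.le]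
  constructor
  · exact (((measurable_const.sub measurable_id).pow_const
      (α - 1)).aestronglyMeasurable).smul hsm.aestronglyMeasurable
  · rw [hasFiniteIntegral_iff_norm]
    have hfun : (fun s => K (t, s)) = (Iic t).indicator
        (fun s => ENNReal.ofReal ((t - s) ^ (α - 1)) * ENNReal.ofReal ‖f s‖) := by
      ext s
      simp only [hK, Set.indicator_apply, mem_setOf_eq, mem_Iic]
    rw [hfun, lintegral_indicator measurableSet_Iic, hμ,
      Measure.restrict_restrict measurableSet_Iic] at hfin_t
    have hset : Iic t ∩ Ioc t₀ b = Ioc t₀ t := by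
      ext x
      simp only [mem_inter_iff, mem_Iic, mem_Ioc]
      exact ⟨fun ⟨a1, a2, _⟩ => ⟨a2, a1⟩, fun ⟨a1, a2⟩ => ⟨a2, a1, a2.trans htb⟩⟩
    rw [hset] at hfin_t
    refine lt_of_le_of_lt (le_of_eq ?_) hfin_t
    apply lintegral_congr_ae
    filter_upwards [ae_restrict_mem measurableSet_Ioc] with s hss
    rw [norm_smul, Real.norm_rpow_of_nonneg (by linarith [hss.2] : (0:ℝ) ≤ t - s),
      Real.norm_of_nonneg (by linarith [hss.2] : (0:ℝ) ≤ t - s),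
      ENNReal.ofReal_mul (Real.rpow_nonneg (by linarith [hss.2]) _)]

lemma aux_fwd {X : Type*} [NormedAddCommGroup X] [NormedSpace ℝ X]
    {α t₀ b : ℝ} (hα : 0 < α) {f : ℝ → X} (h1 : t₀ < b)
    (hf : AEStronglyMeasurable f (volume.restrict (Ioc t₀ b)))
    (hfi : IntegrableOn f (Ioc t₀ b) volume) :
    ∀ᵐ t ∂(volume.restrict (Ioc t₀ b)),
      IntervalIntegrable (fun s => (t - s) ^ (α - 1) • f s) volume t₀ t := by
  obtain ⟨g, hg_sm, hfg⟩ := hf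
  have hgi : IntegrableOn g (Ioc t₀ b) volume := hfi.congr hfg
  have hmain := aux_fwd_sm hα h1 hg_sm hgi
  filter_upwards [hmain, ae_restrict_mem measurableSet_Ioc] with t hgt htmem
  rw [intervalIntegrable_iff_integrableOn_Ioc_of_le htmem.1.le] at hgt ⊢
  apply hgt.congr
  have : ∀ᵐ s ∂(volume.restrict (Ioc t₀ t)), f s = g s :=
    ae_restrict_of_ae_restrict_of_subset (Ioc_subset_Ioc_right htmem.2) hfg
  filter_upwards [this] with s hseq
  rw [hseq]

/-- `f ∈ L¹(t₀,b;X)` for every `b ∈ (t₀,t₁)` iff the RL fractional integral of `f`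
exists for almost every `t ∈ [t₀,t₁]`. -/
theorem rl_exists_iff_locally_integrable {X : Type*} [NormedAddCommGroup X] [NormedSpace ℝ X]
    [CompleteSpace X] (t₀ t₁ α : ℝ) (ht : t₀ < t₁) (hα : 0 < α) (f : ℝ → X)
    (hf : AEStronglyMeasurable f (volume.restrict (Set.Icc t₀ t₁))) :
    (∀ b ∈ Set.Ioo t₀ t₁, IntegrableOn f (Set.Icc t₀ b) volume) ↔
    (∀ᵐ t ∂(volume.restrict (Set.Icc t₀ t₁)),
        IntervalIntegrable (fun s => (t - s) ^ (α - 1) • f s) volume t₀ t) := by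
  constructor
  · intro h
    set b : ℕ → ℝ := fun n => t₁ - (t₁ - t₀) / (n + 2) with hb
    have hb1 : ∀ n, t₀ < b n := by
      intro n
      have h2 : (0:ℝ) < (n:ℝ) + 2 := by positivity
      have : (t₁ - t₀) / (n + 2) < t₁ - t₀ := by
        apply div_lt_self (by linarith) (by linarith)
      simp only [hb]; linarith
    have hb2 : ∀ n, b n < t₁ := by
      intro n
      have h2 : (0:ℝ) < (n:ℝ) + 2 := by positivity
      have : 0 < (t₁ - t₀) / (n + 2) := div_pos (by linarith) h2
      simp only [hb]; linarith
    have hUnion : Ioo t₀ t₁ ⊆ ⋃ n, Ioc t₀ (b n) := by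
      intro x hx
      obtain ⟨n, hn⟩ := exists_nat_gt ((t₁ - t₀) / (t₁ - x))
      refine mem_iUnion.mpr ⟨n, hx.1, ?_⟩
      have hx1 : 0 < t₁ - x := by linarith [hx.2]
      have h2 : (0:ℝ) < (n:ℝ) + 2 := by positivity
      have hle : (t₁ - t₀) / ((n:ℝ) + 2) ≤ t₁ - x := by
        rw [div_le_iff₀ h2]
        have := (div_le_iff₀ hx1).mp (le_of_lt hn)
        nlinarith [hx1]
      simp only [hb]; linarith
    have key : ∀ n : ℕ, ∀ᵐ t ∂(volume.restrict (Ioc t₀ (b n))),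
        IntervalIntegrable (fun s => (t - s) ^ (α - 1) • f s) volume t₀ t := by
      intro n
      apply aux_fwd hα (hb1 n)
      · exact hf.mono_measure (Measure.restrict_mono
          (Ioc_subset_Icc_self.trans (Icc_subset_Icc_right (hb2 n).le)) le_rfl)
      · exact (h (b n) ⟨hb1 n, hb2 n⟩).mono_set Ioc_subset_Icc_self
    rw [← Measure.restrict_congr_set Ioc_ae_eq_Icc, ← Measure.restrict_congr_set Ioo_ae_eq_Ioc]
    exact ae_restrict_of_ae_restrict_of_subset hUnion ((ae_restrict_iUnion_iff _ _).mpr key)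
  · intro h b hb
    have hpos : 0 < volume.restrict (Icc t₀ t₁) (Ioo b t₁) := by
      rw [Measure.restrict_apply measurableSet_Ioo]
      have : Ioo b t₁ ∩ Icc t₀ t₁ = Ioo b t₁ := by
        apply inter_eq_self_of_subset_left
        exact fun x hx => ⟨(hb.1.trans hx.1).le, hx.2.le⟩
      rw [this, Real.volume_Ioo]
      exact ENNReal.ofReal_pos.mpr (by linarith [hb.2])
    have hex : ∃ t ∈ Ioo b t₁,
        IntervalIntegrable (fun s => (t - s) ^ (α - 1) • f s) volume t₀ t := by
      by_contra hcon
      push_neg at hcon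
      have hsub : Ioo b t₁ ⊆ {t | ¬ IntervalIntegrable
          (fun s => (t - s) ^ (α - 1) • f s) volume t₀ t} := fun t htt => hcon t htt
      have h0 := ae_iff.mp h
      exact absurd (measure_mono_null hsub h0) (by exact fun hc => hpos.ne' hc)
    obtain ⟨t, htmem, hP⟩ := hex
    apply aux_back hα hb.1 htmem.1
    · exact hf.mono_measure (Measure.restrict_mono
        (Ioc_subset_Icc_self.trans (Icc_subset_Icc_right hb.2.le)) le_rfl)
    · have := (intervalIntegrable_iff_integrableOn_Ioc_of_le
        (by linarith [hb.1, htmem.1] : t₀ ≤ t)).mp hP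
      exact this.mono_set (Ioc_subset_Ioc_right htmem.1.le)
end

section
/- Let $X$ be a nontrivial Banach space, $1\le p\le\infty$, and $\alpha>0$. Then the Riemann-Liouville fractional integral does not map $L^p(t_0,\infty;X)$ into itself: there exists $f\in L^p(t_0,\infty;X)$ such that $J^\alpha_{t_0,t}f\notin L^p(t_0,\infty;X)$. For $p=\infty$ one may take $f$ constant; for $1\le p<\infty$ one may take $f(s)=0$ for $t_0\le s\le t_0+1$ and $f(s)=(s-t_0)^{-(\alpha+1/p)}x$ for $s>t_0+1$, where $\|x\|_X=1$. -/
open MeasureTheory Real Set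
open scoped ENNReal

section auxRL

lemma aux_integrableOn_sub_rpow_iff {t₀ a r : ℝ} (ha : t₀ < a) :
    IntegrableOn (fun s => (s - t₀) ^ r) (Ioi a) ↔ r < -1 := by
  have A : MeasurableEmbedding (fun x : ℝ => x + t₀) :=
    (Homeomorph.addRight t₀).isClosedEmbedding.measurableEmbedding
  rw [IntegrableOn, ← map_add_right_eq_self volume t₀, ← IntegrableOn,
    MeasurableEmbedding.integrableOn_map_iff A]
  have h1 : ((fun x : ℝ => x + t₀) ⁻¹' Ioi a) = Ioi (a - t₀) := by
    ext y; simp [lt_sub_iff_add_lt]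
  have h2 : ((fun s : ℝ => (s - t₀) ^ r) ∘ (fun x : ℝ => x + t₀)) = fun x : ℝ => x ^ r := by
    ext y; simp
  rw [h1, h2, integrableOn_Ioi_rpow_iff (by linarith)]


lemma aux_measurable_rpow_const (c : ℝ) : Measurable fun x : ℝ => x ^ c := by
  classical
  have h := ContinuousOn.measurable_piecewise (s := ({(0:ℝ)} : Set ℝ))
    (f := fun x : ℝ => x ^ c) (g := fun x : ℝ => x ^ c)
    (continuousOn_singleton _ _)
    (fun x hx => (Real.continuousAt_rpow_const x c (Or.inl hx)).continuousWithinAt)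
    (measurableSet_singleton 0)
  simpa [Set.piecewise_same] using h

lemma aux_lower (H : ℝ → ℝ) {t₀ a b t c : ℝ} (h1 : t₀ ≤ a) (h2 : a ≤ b) (h3 : b ≤ t)
    (hH : IntervalIntegrable H volume t₀ t)
    (hpos : ∀ s ∈ Icc t₀ t, 0 ≤ H s)
    (hc : ∀ s ∈ Icc a b, c ≤ H s) :
    (b - a) * c ≤ ∫ s in t₀..t, H s := by
  have hsub1 : IntervalIntegrable H volume t₀ a :=
    hH.mono_set (by rw [uIcc_of_le h1, uIcc_of_le (by linarith)]
                    exact Icc_subset_Icc le_rfl (by linarith))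
  have hsub2 : IntervalIntegrable H volume a b :=
    hH.mono_set (by rw [uIcc_of_le h2, uIcc_of_le (by linarith)]
                    exact Icc_subset_Icc (by linarith) (by linarith))
  have hsub3 : IntervalIntegrable H volume b t :=
    hH.mono_set (by rw [uIcc_of_le h3, uIcc_of_le (by linarith)]
                    exact Icc_subset_Icc (by linarith) le_rfl)
  have e1 : (∫ s in t₀..a, H s) + (∫ s in a..b, H s) + (∫ s in b..t, H s)
      = ∫ s in t₀..t, H s := by
    rw [intervalIntegral.integral_add_adjacent_intervals hsub1 hsub2,
      intervalIntegral.integral_add_adjacent_intervals (hsub1.trans hsub2) hsub3]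
  have p1 : 0 ≤ ∫ s in t₀..a, H s :=
    intervalIntegral.integral_nonneg h1 (fun u hu => hpos u ⟨hu.1, by linarith [hu.2]⟩)
  have p3 : 0 ≤ ∫ s in b..t, H s :=
    intervalIntegral.integral_nonneg h3 (fun u hu => hpos u ⟨by linarith [hu.1], hu.2⟩)
  have p2 : (b - a) * c ≤ ∫ s in a..b, H s := by
    have := intervalIntegral.integral_mono_on (f := fun _ => c) (g := H) h2
      intervalIntegrable_const hsub2 hc
    simpa [smul_eq_mul, mul_comm] using this
  linarith

end auxRL

lemma aux_RL_smul {X : Type*} [NormedAddCommGroup X] [NormedSpace ℝ X] [CompleteSpace X]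
    (α t₀ : ℝ) (g : ℝ → ℝ) (x : X) (t : ℝ) :
    RL α t₀ (fun s => g s • x) t
      = ((Real.Gamma α)⁻¹ * ∫ s in t₀..t, (t - s) ^ (α - 1) * g s) • x := by
  unfold RL
  simp_rw [smul_smul]
  rw [intervalIntegral.integral_smul_const, smul_smul]

lemma aux_int_rpow (α t₀ t : ℝ) (hα : 0 < α) :
    (∫ s in t₀..t, (t - s) ^ (α - 1)) = (t - t₀) ^ α / α := by
  have := intervalIntegral.integral_comp_sub_left (a := t₀) (b := t)
    (fun u : ℝ => u ^ (α - 1)) t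
  rw [this, sub_self, integral_rpow (Or.inl (by linarith))]
  rw [Real.zero_rpow (by linarith), sub_add_cancel, sub_zero]

set_option maxHeartbeats 800000 in
/-- On the unbounded interval `[t₀,∞)`, the RL fractional integral does not map
`Lᵖ(t₀,∞;X)` into itself: there is `f ∈ Lᵖ(t₀,∞;X)` with `J^α f ∉ Lᵖ(t₀,∞;X)`. -/
theorem rl_not_welldefined_on_halfline {X : Type*} [NormedAddCommGroup X]
    [NormedSpace ℝ X] [CompleteSpace X] [Nontrivial X]
    (t₀ α : ℝ) (hα : 0 < α) (p : ℝ≥0∞) (hp : 1 ≤ p) :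
    ∃ f : ℝ → X, MemLp f p (volume.restrict (Set.Ici t₀)) ∧
      ¬ MemLp (RL α t₀ f) p (volume.restrict (Set.Ici t₀)) := by
  obtain ⟨x, hx⟩ := exists_norm_eq X (zero_le_one' ℝ)
  set μ := volume.restrict (Ici t₀) with hμ
  have hG : 0 < (Real.Gamma α)⁻¹ := inv_pos.mpr (Real.Gamma_pos_of_pos hα)
  by_cases hptop : p = ∞
  · subst hptop
    refine ⟨fun _ => x, memLp_top_const x, ?_⟩
    intro hm
    have hM : eLpNormEssSup (RL α t₀ (fun _ => x)) μ < ∞ := by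
      have := hm.2; rwa [eLpNorm_exponent_top] at this
    set M := (eLpNormEssSup (RL α t₀ (fun _ => x)) μ).toReal with hMdef
    set c := (Real.Gamma α)⁻¹ / α with hc_def
    have hc : 0 < c := div_pos hG hα
    set B := max 1 ((M / c + 1) ^ α⁻¹) with hB
    set T := t₀ + B with hT_def
    have hT : t₀ < T := by
      have : (1:ℝ) ≤ B := le_max_left _ _
      simp only [hT_def]; linarith
    have key : ∀ t : ℝ, T ≤ t → M < ‖RL α t₀ (fun _ : ℝ => x) t‖ := by
      intro t ht
      have ht0 : t₀ ≤ t := by linarith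
      have h1 : (fun _ : ℝ => x) = (fun s : ℝ => (1:ℝ) • x) := by ext s; simp
      have hRL : RL α t₀ (fun _ : ℝ => x) t = (c * (t - t₀) ^ α) • x := by
        rw [h1, aux_RL_smul]
        simp only [mul_one]
        rw [aux_int_rpow α t₀ t hα]
        congr 1
        rw [hc_def]; ring
      rw [hRL, norm_smul, hx, mul_one, Real.norm_eq_abs,
        abs_of_nonneg (mul_nonneg hc.le (Real.rpow_nonneg (by linarith) _))]
      have h2 : (M / c + 1) ^ α⁻¹ ≤ t - t₀ := by
        have : B ≤ t - t₀ := by simp only [hT_def] at ht; linarith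
        exact le_trans (le_max_right _ _) this
      have h3 : M / c + 1 ≤ (t - t₀) ^ α := by
        have hnn : (0:ℝ) ≤ M / c + 1 := by positivity
        calc M / c + 1 = ((M / c + 1) ^ α⁻¹) ^ α := (Real.rpow_inv_rpow hnn hα.ne').symm
          _ ≤ (t - t₀) ^ α := Real.rpow_le_rpow (by positivity) h2 hα.le
      have : M + c ≤ c * (t - t₀) ^ α := by
        calc M + c = c * (M / c + 1) := by field_simp
          _ ≤ c * (t - t₀) ^ α := by nlinarith
      linarith
    have hae : ∀ᵐ t ∂μ, ‖RL α t₀ (fun _ : ℝ => x) t‖ ≤ M := by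
      filter_upwards [ae_le_eLpNormEssSup (f := RL α t₀ fun _ => x) (μ := μ)] with t h
      have := ENNReal.toReal_mono hM.ne h
      simpa using this
    have hae2 : ∀ᵐ t ∂(volume.restrict (Ici T)), ‖RL α t₀ (fun _ : ℝ => x) t‖ ≤ M :=
      ae_mono (Measure.restrict_mono (Ici_subset_Ici.mpr hT.le) le_rfl) hae
    have hfalse : ∀ᵐ t ∂(volume.restrict (Ici T)), False := by
      filter_upwards [hae2, ae_restrict_mem measurableSet_Ici] with t h1 h2
      exact absurd h1 (not_le.mpr (key t h2))
    rw [ae_iff] at hfalse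
    simp only [not_false_eq_true, setOf_true] at hfalse
    rw [Measure.restrict_apply_univ] at hfalse
    exact (by simp [Real.volume_Ici] at hfalse)
  · -- 1 ≤ p < ∞
    have p0 : p ≠ 0 := by
      intro h; rw [h] at hp; exact (by simp at hp)
    set q := p.toReal with hq_def
    have hq1 : 1 ≤ q := by
      have := ENNReal.toReal_mono hptop hp
      simpa using this
    have hq0 : 0 < q := lt_of_lt_of_le one_pos hq1
    have hq0' : (0:ℝ) < 1/q := by positivity
    set e := -(α + 1/q) with he_def
    have he_neg : e < 0 := by rw [he_def]; linarith
    set g : ℝ → ℝ := (Ici (t₀+1)).indicator (fun s => (s - t₀) ^ e) with hg_def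
    have hgmeas : Measurable g :=
      Measurable.indicator ((aux_measurable_rpow_const e).comp (measurable_id.sub_const t₀)) measurableSet_Ici
    have hg_nonneg : ∀ s, 0 ≤ g s := by
      intro s
      rw [hg_def]
      by_cases hs : s ∈ Ici (t₀+1)
      · rw [indicator_of_mem hs]
        exact Real.rpow_nonneg (by simp only [mem_Ici] at hs; linarith) _
      · rw [indicator_of_notMem hs]
    have hg_le_one : ∀ s, g s ≤ 1 := by
      intro s
      rw [hg_def]
      by_cases hs : s ∈ Ici (t₀+1)
      · rw [indicator_of_mem hs]
        exact Real.rpow_le_one_of_one_le_of_nonpos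
          (by simp only [mem_Ici] at hs; linarith) he_neg.le
      · rw [indicator_of_notMem hs]; exact zero_le_one
    have hg_eval : ∀ s, t₀ + 1 ≤ s → g s = (s - t₀) ^ e := by
      intro s hs
      rw [hg_def, indicator_of_mem (mem_Ici.mpr hs)]
    refine ⟨fun s => g s • x, ?_, ?_⟩
    · -- MemLp f p μ
      have hfmeas : AEStronglyMeasurable (fun s => g s • x) μ :=
        hgmeas.aestronglyMeasurable.smul_const x
      have hInt : Integrable (fun s => ‖g s‖ ^ q) μ := by
        have heq : (fun s => ‖g s‖ ^ q)
            = (Ici (t₀+1)).indicator (fun s => (s - t₀) ^ (e * q)) := by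
          ext s
          by_cases hs : s ∈ Ici (t₀+1)
          · have h1 : (0:ℝ) ≤ s - t₀ := by simp only [mem_Ici] at hs; linarith
            rw [indicator_of_mem hs, hg_def, indicator_of_mem hs, Real.norm_eq_abs,
              abs_of_nonneg (Real.rpow_nonneg h1 _), ← Real.rpow_mul h1]
          · rw [indicator_of_notMem hs, hg_def, indicator_of_notMem hs]
            simp [Real.zero_rpow hq0.ne']
        rw [heq, hμ, integrable_indicator_iff measurableSet_Ici]
        have hOn : IntegrableOn (fun s => (s - t₀) ^ (e*q)) (Ici (t₀+1)) volume := by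
          rw [integrableOn_Ici_iff_integrableOn_Ioi,
            aux_integrableOn_sub_rpow_iff (by linarith)]
          have heq2 : e * q = -(α * q + 1) := by
            rw [he_def]; field_simp
          rw [heq2]
          have : 0 < α * q := by positivity
          linarith
        have hres : (volume.restrict (Ici t₀)).restrict (Ici (t₀+1))
            = volume.restrict (Ici (t₀+1)) := by
          rw [Measure.restrict_restrict measurableSet_Ici,
            inter_eq_left.mpr (Ici_subset_Ici.mpr (by linarith))]
        rw [IntegrableOn, hres]
        exact hOn
      have hmemg : MemLp g p μ := by
        rw [← memLp_norm_rpow_iff hgmeas.aestronglyMeasurable p0 hptop,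
          ENNReal.div_self p0 hptop, memLp_one_iff_integrable]
        exact hInt
      refine ⟨hfmeas, ?_⟩
      have hnorm : eLpNorm (fun s => g s • x) p μ = eLpNorm g p μ :=
        eLpNorm_congr_norm_ae (Filter.Eventually.of_forall fun s => by
          rw [norm_smul, hx, mul_one])
      rw [hnorm]
      exact hmemg.2
    · -- ¬ MemLp (RL α t₀ f) p μ
      intro hm
      -- the key lower bound
      have hH : ∀ t, t₀ ≤ t →
          IntervalIntegrable (fun s => (t - s)^(α-1) * g s) volume t₀ t := by
        intro t ht
        have K : IntervalIntegrable (fun s : ℝ => (t - s)^(α-1)) volume t₀ t := by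
          have := (intervalIntegral.intervalIntegrable_rpow' (a := 0) (b := t - t₀)
            (by linarith : (-1:ℝ) < α - 1)).comp_sub_left t
          simpa using this.symm
        apply K.mono_fun
          ((((aux_measurable_rpow_const (α-1)).comp
            (measurable_const.sub measurable_id)).mul hgmeas).aestronglyMeasurable)
        filter_upwards with s
        rw [Real.norm_eq_abs, Real.norm_eq_abs]
        show |(t - s) ^ (α - 1) * g s| ≤ |(t - s) ^ (α - 1)|
        rw [abs_mul]
        exact mul_le_of_le_one_right (abs_nonneg _)
          (abs_le.mpr ⟨by linarith [hg_nonneg s], hg_le_one s⟩)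
      have hpos : ∀ t, ∀ s ∈ Icc t₀ t, 0 ≤ (t - s)^(α-1) * g s := by
        intro t s hs
        exact mul_nonneg (Real.rpow_nonneg (by linarith [hs.2]) _) (hg_nonneg s)
      have hnormRL : ∀ t, (Real.Gamma α)⁻¹ * (∫ s in t₀..t, (t - s)^(α-1) * g s)
          ≤ ‖RL α t₀ (fun s => g s • x) t‖ := by
        intro t
        rw [aux_RL_smul, norm_smul, hx, mul_one, Real.norm_eq_abs, abs_mul,
          abs_of_nonneg hG.le]
        exact mul_le_mul_of_nonneg_left (le_abs_self _) hG.le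
      obtain ⟨C, hC, r, hrq, hkey⟩ : ∃ C, 0 < C ∧ ∃ r : ℝ, -1 ≤ r * q ∧
          ∀ t, t₀ + 4 ≤ t → C * (t - t₀) ^ r ≤ ‖RL α t₀ (fun s => g s • x) t‖ := by
        rcases le_or_gt (1 - 1/q) α with hcase | hcase
        · -- here `r = α - 1`
          have hκpos : (0:ℝ) < min 1 (2^(1-α)) :=
            lt_min one_pos (Real.rpow_pos_of_pos two_pos _)
          have h2e : (0:ℝ) < 2 ^ e := Real.rpow_pos_of_pos two_pos e
          refine ⟨(Real.Gamma α)⁻¹ * (min 1 (2^(1-α)) * 2 ^ e), by positivity, α - 1, ?_, ?_⟩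
          · have h1 : (-(1/q)) * q = -1 := by field_simp
            have h2 : (-(1/q)) ≤ α - 1 := by linarith
            have := mul_le_mul_of_nonneg_right h2 hq0.le
            linarith
          · intro t ht
            have h4 : (0:ℝ) < t - t₀ := by linarith
            have hrnn : (0:ℝ) ≤ (t - t₀)^(α-1) := Real.rpow_nonneg h4.le _
            have hlow : ∀ s ∈ Icc (t₀+1) (t₀+2),
                (min 1 (2^(1-α)) * (t-t₀)^(α-1)) * (2^e) ≤ (t - s)^(α-1) * g s := by
              intro s hs
              obtain ⟨hs1, hs2⟩ := hs
              have hts : (t - t₀)/2 ≤ t - s := by linarith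
              have hts2 : t - s ≤ t - t₀ := by linarith
              have htspos : (0:ℝ) < t - s := by linarith
              have hg1 : (2:ℝ)^e ≤ g s := by
                rw [hg_eval s hs1]
                exact Real.rpow_le_rpow_of_nonpos (by linarith) (by linarith) he_neg.le
              have hf1 : min 1 (2^(1-α)) * (t-t₀)^(α-1) ≤ (t - s)^(α-1) := by
                rcases le_or_gt α 1 with h1 | h1
                · have hmono : (t - t₀)^(α-1) ≤ (t - s)^(α-1) :=
                    Real.rpow_le_rpow_of_nonpos htspos hts2 (by linarith)
                  have hκ1 : min 1 (2^(1-α) : ℝ) ≤ 1 := min_le_left _ _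
                  nlinarith
                · have h5 : ((t - t₀)/2)^(α-1) ≤ (t - s)^(α-1) :=
                    Real.rpow_le_rpow (by positivity) hts (by linarith)
                  have h6 : ((t - t₀)/2)^(α-1) = (t-t₀)^(α-1) * 2^(1-α) := by
                    rw [Real.div_rpow h4.le (by norm_num : (0:ℝ) ≤ 2), div_eq_mul_inv,
                      ← Real.rpow_neg (by norm_num : (0:ℝ) ≤ 2), neg_sub]
                  have hκ2 : min 1 (2^(1-α) : ℝ) ≤ 2^(1-α) := min_le_right _ _
                  have h2a : (0:ℝ) < 2^(1-α) := Real.rpow_pos_of_pos two_pos _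
                  nlinarith
              exact mul_le_mul hf1 hg1 h2e.le (Real.rpow_nonneg htspos.le _)
            have hI := aux_lower _ (by linarith : t₀ ≤ t₀+1) (by linarith : t₀+1 ≤ t₀+2)
              (by linarith : t₀+2 ≤ t) (hH t (by linarith)) (hpos t) hlow
            have hI' : min 1 (2^(1-α)) * (t-t₀)^(α-1) * 2^e
                ≤ ∫ s in t₀..t, (t-s)^(α-1) * g s := by
              have he1 : (t₀+2 - (t₀+1)) = (1:ℝ) := by ring
              rw [he1, one_mul] at hI
              linarith
            calc (Real.Gamma α)⁻¹ * (min 1 (2^(1-α)) * 2^e) * (t - t₀)^(α-1)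
                = (Real.Gamma α)⁻¹ * (min 1 (2^(1-α)) * (t-t₀)^(α-1) * 2^e) := by ring
              _ ≤ (Real.Gamma α)⁻¹ * ∫ s in t₀..t, (t-s)^(α-1) * g s :=
                  mul_le_mul_of_nonneg_left hI' hG.le
              _ ≤ ‖RL α t₀ (fun s => g s • x) t‖ := hnormRL t
        · -- here `r = -(1/q)`
          have hα1 : α < 1 := by linarith
          refine ⟨(Real.Gamma α)⁻¹ / 4, by positivity, -(1/q), ?_, ?_⟩
          · have h1 : (-(1/q)) * q = -1 := by field_simp
            rw [h1]
          · intro t ht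
            have h4 : (0:ℝ) < t - t₀ := by linarith
            have h44 : (4:ℝ) ≤ t - t₀ := by linarith
            have hlow : ∀ s ∈ Icc (t₀ + (t - t₀)/2) (t₀ + 3*(t - t₀)/4),
                (t-t₀)^(α-1) * (t-t₀)^e ≤ (t - s)^(α-1) * g s := by
              intro s hs
              obtain ⟨hs1, hs2⟩ := hs
              have hs1' : t₀ + 2 ≤ s := by linarith
              have hts1 : (t - t₀)/4 ≤ t - s := by linarith
              have htspos : (0:ℝ) < t - s := by linarith
              have hts2 : t - s ≤ t - t₀ := by linarith
              have hg1 : (t-t₀)^e ≤ g s := by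
                rw [hg_eval s (by linarith)]
                exact Real.rpow_le_rpow_of_nonpos (by linarith) (by linarith) he_neg.le
              have hf1 : (t-t₀)^(α-1) ≤ (t-s)^(α-1) :=
                Real.rpow_le_rpow_of_nonpos htspos hts2 (by linarith)
              exact mul_le_mul hf1 hg1 (Real.rpow_nonneg h4.le e)
                (Real.rpow_nonneg htspos.le _)
            have hI := aux_lower _ (show t₀ ≤ t₀ + (t - t₀)/2 by linarith)
              (show t₀ + (t - t₀)/2 ≤ t₀ + 3*(t - t₀)/4 by linarith)
              (show t₀ + 3*(t - t₀)/4 ≤ t by linarith)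
              (hH t (by linarith)) (hpos t) hlow
            have hba : t₀ + 3*(t - t₀)/4 - (t₀ + (t - t₀)/2) = (t - t₀)/4 := by ring
            rw [hba] at hI
            have hpow : (t-t₀) * ((t-t₀)^(α-1) * (t-t₀)^e) = (t-t₀)^(-(1/q)) := by
              have h1 : (t-t₀) * ((t-t₀)^(α-1) * (t-t₀)^e)
                  = (t-t₀)^(1:ℝ) * ((t-t₀)^(α-1) * (t-t₀)^e) := by
                rw [Real.rpow_one]
              rw [h1, ← Real.rpow_add h4, ← Real.rpow_add h4]
              congr 1
              rw [he_def]; ring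
            calc (Real.Gamma α)⁻¹/4 * (t-t₀)^(-(1/q))
                = (Real.Gamma α)⁻¹ * ((t - t₀)/4 * ((t-t₀)^(α-1) * (t-t₀)^e)) := by
                  rw [← hpow]; ring
              _ ≤ (Real.Gamma α)⁻¹ * ∫ s in t₀..t, (t-s)^(α-1) * g s :=
                  mul_le_mul_of_nonneg_left hI hG.le
              _ ≤ ‖RL α t₀ (fun s => g s • x) t‖ := hnormRL t
      have hsub : Ioi (t₀+4) ⊆ Ici t₀ := fun y hy =>
        le_of_lt (lt_of_le_of_lt (by linarith : t₀ ≤ t₀ + 4) hy)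
      have hm2 : MemLp (RL α t₀ fun s => g s • x) p (volume.restrict (Ioi (t₀+4))) :=
        hm.mono_measure (hμ ▸ Measure.restrict_mono hsub le_rfl)
      have hint := hm2.integrable_norm_rpow p0 hptop
      have hdom : Integrable (fun t => C ^ q * (t - t₀) ^ (r * q))
          (volume.restrict (Ioi (t₀+4))) := by
        apply hint.mono'
          ((measurable_const.mul ((aux_measurable_rpow_const (r*q)).comp
            (measurable_id.sub_const t₀))).aestronglyMeasurable)
        filter_upwards [ae_restrict_mem measurableSet_Ioi] with t ht
        have ht' : t₀ + 4 ≤ t := le_of_lt ht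
        have h4 : (0:ℝ) < t - t₀ := by linarith
        have hb := hkey t ht'
        have h0 : 0 ≤ C * (t - t₀)^r := mul_nonneg hC.le (Real.rpow_nonneg h4.le _)
        calc ‖C ^ q * (t - t₀) ^ (r * q)‖ = (C * (t - t₀)^r) ^ q := by
              rw [Real.norm_eq_abs,
                abs_of_nonneg (mul_nonneg (Real.rpow_nonneg hC.le _)
                  (Real.rpow_nonneg h4.le _)),
                Real.mul_rpow hC.le (Real.rpow_nonneg h4.le _), Real.rpow_mul h4.le]
          _ ≤ ‖RL α t₀ (fun s => g s • x) t‖ ^ q := Real.rpow_le_rpow h0 hb hq0.le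
      have hCq : (C:ℝ)^q ≠ 0 := ne_of_gt (Real.rpow_pos_of_pos hC q)
      have hfin := (integrable_const_mul_iff (isUnit_iff_ne_zero.mpr hCq)
        (fun t => (t - t₀) ^ (r * q))).mp hdom
      rw [← IntegrableOn, aux_integrableOn_sub_rpow_iff (by linarith)] at hfin
      linarith
end
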